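/- On the line at infinity, f acts on slopes by t ↦ b − t: for all a, b ∈ ℂ and every t ∈ ℂ with t ≠ 0, the quotient f₂(s, t·s)/f₁(s, t·s) tends to b − t as the complex parameter s tends to infinity (i.e., along the filter |s| → ∞, where for all s of sufficiently large modulus the point (s, t·s) lies in the domain of f and f₁(s, t·s) ≠ 0). -/
import Mathlib


open Filter Bornology

/-- First component of the birational map `f = f_{a,b}`. -/
noncomputable def f1 (x y : ℂ) : ℂ := 1 - x + x / y

/-- Second component of the birational map `f = f_{a,b}`. -/
noncomputable def f2 (a b x y : ℂ) : ℂ := b * f1 x y + a + y - y / x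

lemma f1_eq (t s : ℂ) (ht : t ≠ 0) (hs : s ≠ 0) :
    f1 s (t * s) = (1 + 1/t) - s := by
  unfold f1
  field_simp
  ring

/-- On the line at infinity, `f` acts on slopes by `t ↦ b - t`: along `|s| → ∞` the point
`(s, t·s)` eventually lies in the domain of `f` with `f₁(s, t·s) ≠ 0`, and the slope
`f₂(s, t·s)/f₁(s, t·s)` of the image tends to `b - t`. -/
theorem slope_at_infinity (a b t : ℂ) (ht : t ≠ 0) :
    (∀ᶠ s : ℂ in cobounded ℂ, s ≠ 0 ∧ t * s ≠ 0 ∧ f1 s (t * s) ≠ 0) ∧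
    Tendsto (fun s : ℂ => f2 a b s (t * s) / f1 s (t * s)) (cobounded ℂ) (nhds (b - t)) := by
  have hbig : ∀ᶠ s : ℂ in cobounded ℂ, ‖(1 + 1/t : ℂ)‖ < ‖s‖ :=
    tendsto_norm_cobounded_atTop.eventually (eventually_gt_atTop _)
  have hdom : ∀ᶠ s : ℂ in cobounded ℂ, s ≠ 0 ∧ t * s ≠ 0 ∧ f1 s (t * s) ≠ 0 := by
    filter_upwards [hbig] with s hs
    have hs0 : s ≠ 0 := by
      intro h; rw [h, norm_zero] at hs; exact absurd hs (not_lt.2 (norm_nonneg _))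
    refine ⟨hs0, mul_ne_zero ht hs0, ?_⟩
    rw [f1_eq t s ht hs0]
    intro h
    have hcs : (1 + 1/t : ℂ) = s := by linear_combination h
    rw [hcs] at hs; exact lt_irrefl _ hs
  refine ⟨hdom, ?_⟩
  have hinv : Tendsto (fun s : ℂ => s⁻¹) (cobounded ℂ) (nhds 0) := tendsto_inv₀_cobounded
  have hnum : Tendsto (fun s : ℂ => (a - t) * s⁻¹ + t) (cobounded ℂ) (nhds t) := by
    have := (hinv.const_mul (a - t)).add_const t
    simpa using this
  have hden : Tendsto (fun s : ℂ => (1 + 1/t) * s⁻¹ - 1) (cobounded ℂ) (nhds (-1)) := by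
    have := (hinv.const_mul (1 + 1/t)).sub_const 1
    simpa using this
  have hq : Tendsto (fun s : ℂ => b + ((a - t) * s⁻¹ + t) / ((1 + 1/t) * s⁻¹ - 1))
      (cobounded ℂ) (nhds (b - t)) := by
    have h1 := hnum.div hden (by norm_num)
    have h2 := h1.const_add b
    have : b + t / (-1 : ℂ) = b - t := by ring
    rw [this] at h2
    exact h2
  refine hq.congr' ?_
  filter_upwards [hdom] with s hsd
  obtain ⟨hs0, hts, hf1⟩ := hsd
  have h1 : f1 s (t * s) = (1 + 1/t) - s := f1_eq t s ht hs0
  have hcs : (1 + 1/t : ℂ) - s ≠ 0 := h1 ▸ hf1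
  have hd : (1 + 1/t : ℂ) * s⁻¹ - 1 ≠ 0 := by
    intro h
    apply hcs
    have h2 : (1 + 1/t : ℂ) * s⁻¹ = 1 := by linear_combination h
    have h3 : (1 + 1/t : ℂ) = s := by
      field_simp at h2 ⊢
      linear_combination h2
    rw [h3]; ring
  have hr : f2 a b s (t * s) / f1 s (t * s) = b + (a + t * s - t) / (1 + 1/t - s) := by
    rw [add_div' _ _ _ hcs]
    congr 1
    simp only [f2, h1]
    rw [mul_div_assoc, div_self hs0, mul_one]
    ring
  have hl : b + ((a - t) * s⁻¹ + t) / ((1 + 1/t) * s⁻¹ - 1)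
      = b + (a + t * s - t) / (1 + 1/t - s) := by
    congr 1
    rw [div_eq_div_iff hd hcs]
    field_simp
    ring
  rw [hl]
  exact hr.symm
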